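/- Let G be a finite σ-soluble group that is not σ-nilpotent but all of whose proper subgroups are σ-nilpotent. Then G is a Schmidt group with |σ(G)| = |π(G)|. -/

import Mathlib

open Pointwise

section SigmaDefs

variable {ι : Type*}

/-- `σ` is a partition of the set of all primes into pairwise disjoint nonempty sets. -/
def IsPrimePartition (σ : ι → Set ℕ) : Prop :=
  (∀ i, ∀ p ∈ σ i, Nat.Prime p) ∧ (∀ i, (σ i).Nonempty) ∧
    (∀ i j, i ≠ j → Disjoint (σ i) (σ j)) ∧
    (∀ p : ℕ, Nat.Prime p → ∃ i, p ∈ σ i)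

/-- All primes dividing `n` lie in a single class `σ i`. -/
def IsSigmaPrimaryNat (σ : ι → Set ℕ) (n : ℕ) : Prop :=
  ∃ i, ∀ p : ℕ, Nat.Prime p → p ∣ n → p ∈ σ i

/-- A group is `σ`-primary if all primes dividing its order lie in a single class of `σ`. -/
def IsSigmaPrimary (σ : ι → Set ℕ) (G : Type*) [Group G] : Prop :=
  IsSigmaPrimaryNat σ (Nat.card G)

/-- A group is `σ`-nilpotent if it is the (internal) direct product of finitely many
normal `σ`-primary subgroups. -/
def SigmaNilpotent (σ : ι → Set ℕ) (G : Type*) [Group G] : Prop :=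
  ∃ (k : ℕ) (N : Fin k → Subgroup G),
    (∀ t, (N t).Normal) ∧ (∀ t, IsSigmaPrimary σ ↥(N t)) ∧
      (∀ t, Disjoint (N t) (⨆ s, ⨆ _ : s ≠ t, N s)) ∧ (⨆ t, N t) = ⊤

/-- `H/K` is a chief factor of `G`: both are normal in `G`, `K < H`, and no normal
subgroup of `G` lies strictly between them. -/
def IsChiefFactor (G : Type*) [Group G] (K H : Subgroup G) : Prop :=
  K.Normal ∧ H.Normal ∧ K < H ∧
    ∀ L : Subgroup G, L.Normal → K ≤ L → L ≤ H → L = K ∨ L = H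

/-- A group is `σ`-soluble if every chief factor is `σ`-primary
(the order of the factor `H/K` is `K.relindex H`). -/
def SigmaSoluble (σ : ι → Set ℕ) (G : Type*) [Group G] : Prop :=
  ∀ K H : Subgroup G, IsChiefFactor G K H → IsSigmaPrimaryNat σ (K.relIndex H)

/-- `A` is `σ`-subnormal in `G`: there is a chain `A = A₀ ≤ A₁ ≤ ⋯ ≤ A_t = G` such that
each `A_{j}` is normal in `A_{j+1}` or `A_{j+1}/(A_j)_{A_{j+1}}` is `σ`-primary. -/
def SigmaSubnormal (σ : ι → Set ℕ) {G : Type*} [Group G] (A : Subgroup G) : Prop :=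
  ∃ (t : ℕ) (f : Fin (t + 1) → Subgroup G),
    f 0 = A ∧ f (Fin.last t) = ⊤ ∧
      ∀ j : Fin t, f j.castSucc ≤ f j.succ ∧
        (((f j.castSucc).subgroupOf (f j.succ)).Normal ∨
          IsSigmaPrimaryNat σ (((f j.castSucc).subgroupOf (f j.succ)).normalCore.index))

/-- `M` is a maximal subgroup of `K` (inside the ambient group `G`). -/
def MaximalIn {G : Type*} [Group G] (M K : Subgroup G) : Prop :=
  M < K ∧ ∀ L : Subgroup G, M < L → L ≤ K → L = K

/-- `H` is an `n`-maximal subgroup of `G`: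
there is a chain `H = M_n < ⋯ < M_1 < M_0 = G` with each term maximal in the previous one. -/
def IsNMaximal {G : Type*} [Group G] : ℕ → Subgroup G → Prop
  | 0, H => H = ⊤
  | n + 1, H => ∃ K : Subgroup G, IsNMaximal n K ∧ MaximalIn H K

/-- `m_σ(G) = n`: every `n`-maximal subgroup of `G` is `σ`-subnormal in `G`, but
(when `n > 1`) some `(n-1)`-maximal subgroup is not `σ`-subnormal in `G`. -/
def mSigmaEq (σ : ι → Set ℕ) (G : Type*) [Group G] (n : ℕ) : Prop :=
  (∀ H : Subgroup G, IsNMaximal n H → SigmaSubnormal σ H) ∧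
    (1 < n → ∃ H : Subgroup G, IsNMaximal (n - 1) H ∧ ¬ SigmaSubnormal σ H)

/-- `H` is a Hall `σ i`-subgroup of `G`. -/
def IsHallSigmaSubgroup (σ : ι → Set ℕ) (i : ι) {G : Type*} [Group G] (H : Subgroup G) : Prop :=
  (∀ p : ℕ, Nat.Prime p → p ∣ Nat.card ↥H → p ∈ σ i) ∧
    (∀ p : ℕ, Nat.Prime p → p ∣ H.index → p ∉ σ i)

/-- A complete Hall `σ`-set of `G`: every nontrivial member is a Hall `σ i`-subgroup of `G`
for some `i`, and for every class `σ i` meeting `π(G)` the set contains exactly one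
Hall `σ i`-subgroup of `G`. -/
def IsCompleteHallSigmaSet (σ : ι → Set ℕ) {G : Type*} [Group G] (𝓗 : Set (Subgroup G)) : Prop :=
  (∀ H ∈ 𝓗, H ≠ ⊥ → ∃ i, IsHallSigmaSubgroup σ i H) ∧
    (∀ i : ι, (σ i ∩ {p : ℕ | Nat.Prime p ∧ p ∣ Nat.card G}).Nonempty →
      ∃! H : Subgroup G, H ∈ 𝓗 ∧ IsHallSigmaSubgroup σ i H)

/-- Two subgroups permute: `AB = BA` as subsets. -/
def PermutesWith {G : Type*} [Group G] (A B : Subgroup G) : Prop :=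
  (A : Set G) * (B : Set G) = (B : Set G) * (A : Set G)

/-- `H` is `σ`-quasinormal (`σ`-permutable) in `G`: `G` possesses a complete Hall `σ`-set `𝓗`
with `H Aˣ = Aˣ H` for all `A ∈ 𝓗` and all `x ∈ G`. -/
def SigmaQuasinormal (σ : ι → Set ℕ) {G : Type*} [Group G] (H : Subgroup G) : Prop :=
  ∃ 𝓗 : Set (Subgroup G), IsCompleteHallSigmaSet σ 𝓗 ∧
    ∀ A ∈ 𝓗, ∀ x : G, PermutesWith H (A.map (MulAut.conj x).toMonoidHom)

/-- `m_{σq}(G) = n`: every `n`-maximal subgroup of `G` is `σ`-quasinormal in `G`, but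
(when `n > 1`) some `(n-1)`-maximal subgroup is not `σ`-quasinormal in `G`. -/
def mSigmaQEq (σ : ι → Set ℕ) (G : Type*) [Group G] (n : ℕ) : Prop :=
  (∀ H : Subgroup G, IsNMaximal n H → SigmaQuasinormal σ H) ∧
    (1 < n → ∃ H : Subgroup G, IsNMaximal (n - 1) H ∧ ¬ SigmaQuasinormal σ H)

/-- The rank of the (soluble) group `G` is at most `m`: every chief factor of order `p ^ k`
has `k ≤ m`. -/
def RankLE (G : Type*) [Group G] (m : ℕ) : Prop :=
  ∀ K H : Subgroup G, IsChiefFactor G K H →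
    ∀ p k : ℕ, Nat.Prime p → K.relIndex H = p ^ k → k ≤ m

/-- `H` is S-quasinormal (S-permutable) in `G`: `H` permutes with every Sylow subgroup. -/
def SQuasinormal {G : Type*} [Group G] (H : Subgroup G) : Prop :=
  ∀ p : ℕ, Nat.Prime p → ∀ P : Sylow p G, PermutesWith H (P : Subgroup G)

/-- `A` is subnormal in `G`. -/
def IsSubnormalIn {G : Type*} [Group G] (A : Subgroup G) : Prop :=
  ∃ (t : ℕ) (f : Fin (t + 1) → Subgroup G),
    f 0 = A ∧ f (Fin.last t) = ⊤ ∧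
      ∀ j : Fin t, f j.castSucc ≤ f j.succ ∧ ((f j.castSucc).subgroupOf (f j.succ)).Normal

/-- A Schmidt group: not nilpotent, but all proper subgroups are nilpotent. -/
def IsSchmidt (G : Type*) [Group G] : Prop :=
  ¬ Group.IsNilpotent G ∧ ∀ H : Subgroup G, H ≠ ⊤ → Group.IsNilpotent ↥H

/-- A finite group is supersoluble if every chief factor has prime order. -/
def IsSupersoluble (G : Type*) [Group G] : Prop :=
  ∀ K H : Subgroup G, IsChiefFactor G K H → Nat.Prime (K.relIndex H)

/-- `l_σ(G) ≤ n`: `G` has a normal series of length `n` with `σ`-nilpotent factors. -/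
def SigmaNilpotentLengthLE (σ : ι → Set ℕ) (G : Type*) [Group G] (n : ℕ) : Prop :=
  ∃ f : Fin (n + 1) → Subgroup G,
    Monotone f ∧ f 0 = ⊥ ∧ f (Fin.last n) = ⊤ ∧ (∀ j, (f j).Normal) ∧
      ∀ (j : Fin n), ∀ [inst : (f j.castSucc).Normal],
        SigmaNilpotent σ ↥((f j.succ).map (QuotientGroup.mk' (f j.castSucc)))

/-- The `σ`-Fitting subgroup of `G`: the product (join) of all normal `σ`-nilpotent
subgroups of `G`. -/
def sigmaFitting (σ : ι → Set ℕ) (G : Type*) [Group G] : Subgroup G :=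
  ⨆ N ∈ {N : Subgroup G | N.Normal ∧ SigmaNilpotent σ ↥N}, N

/-- `F` is the `n`-th term `F_{nσ}(G)` of the upper `σ`-nilpotent series of `G`:
`F_{0σ}(G) = 1` and `F_{nσ}(G)/F_{(n-1)σ}(G) = F_σ(G/F_{(n-1)σ}(G))`. -/
def IsUpperSigmaNilpotentSeriesTerm (σ : ι → Set ℕ) (G : Type*) [Group G] :
    ℕ → Subgroup G → Prop
  | 0, F => F = ⊥
  | n + 1, F => ∃ F' : Subgroup G, IsUpperSigmaNilpotentSeriesTerm σ G n F' ∧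
      ∀ [inst : F'.Normal],
        F = Subgroup.comap (QuotientGroup.mk' F') (sigmaFitting σ (G ⧸ F'))

/-- `O_π(G)`: the largest normal subgroup of `G` whose order is a `π`-number
(here realised as the join of all normal `π`-subgroups). -/
def OPi (π : Set ℕ) (G : Type*) [Group G] : Subgroup G :=
  ⨆ N ∈ {N : Subgroup G | N.Normal ∧ ∀ p : ℕ, Nat.Prime p → p ∣ Nat.card ↥N → p ∈ π}, N

/-- `G` is `π`-closed: `O_π(G)` is a Hall `π`-subgroup of `G`, i.e. no prime in `π`
divides its index. -/
def PiClosed (π : Set ℕ) (G : Type*) [Group G] : Prop :=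
  ∀ p : ℕ, Nat.Prime p → p ∣ (OPi π G).index → p ∉ π

/-- The set of primes belonging to the classes of `σ` indexed by `S` (i.e. `∪ Π`). -/
def PiPrimes (σ : ι → Set ℕ) (S : Set ι) : Set ℕ := ⋃ i ∈ S, σ i

/-- `n` and `m` are `σ`-coprime: `σ(n) ∩ σ(m) = ∅`. -/
def SigmaCoprime (σ : ι → Set ℕ) (n m : ℕ) : Prop :=
  ∀ i : ι, ∀ p q : ℕ, Nat.Prime p → Nat.Prime q → p ∣ n → q ∣ m →
    p ∈ σ i → q ∈ σ i → False

/-- `D` is the `σ`-nilpotent residual `G^{𝔑_σ}` of `G`: the smallest normal subgroup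
with `σ`-nilpotent quotient. -/
def IsSigmaNilpotentResidual (σ : ι → Set ℕ) {G : Type*} [Group G] (D : Subgroup G) : Prop :=
  D.Normal ∧
    (∀ [inst : D.Normal], SigmaNilpotent σ (G ⧸ D)) ∧
    (∀ (N : Subgroup G) [inst : N.Normal], SigmaNilpotent σ (G ⧸ N) → D ≤ N)

/-- The chief factor `H/K` is `σ`-central in `G`: the semidirect product
`(H/K) ⋊ (G/C_G(H/K))` is `σ`-primary; since `σ`-primarity depends only on the order,
this is expressed via `|H/K| * |G/C_G(H/K)|`. -/
def SigmaCentralFactor (σ : ι → Set ℕ) {G : Type*} [Group G] (K H : Subgroup G)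
    [K.Normal] : Prop :=
  IsSigmaPrimaryNat σ
    (Nat.card ↥(H.map (QuotientGroup.mk' K)) *
      (Subgroup.centralizer ((H.map (QuotientGroup.mk' K) : Subgroup (G ⧸ K)) : Set (G ⧸ K))).index)

/-- `σ(G)`: the set of classes of `σ` meeting `π(G)`. -/
def sigmaOf (σ : ι → Set ℕ) (G : Type*) [Group G] : Set ι :=
  {i : ι | (σ i ∩ {p : ℕ | Nat.Prime p ∧ p ∣ Nat.card G}).Nonempty}

end SigmaDefs
section AuxLemmas

variable {ι : Type*} {σ : ι → Set ℕ} {Γ : Type*} [Group Γ]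

lemma orderOf_dvd_card_of_mem' [Finite Γ] {A : Subgroup Γ} {x : Γ} (hx : x ∈ A) :
    orderOf x ∣ Nat.card A := by
  have h1 : orderOf (⟨x, hx⟩ : A) ∣ Nat.card A := orderOf_dvd_natCard _
  have h2 := orderOf_injective A.subtype A.subtype_injective ⟨x, hx⟩
  simpa [h2] using h1

lemma disjoint_of_coprime_card' [Finite Γ] {A B : Subgroup Γ}
    (h : Nat.Coprime (Nat.card A) (Nat.card B)) : Disjoint A B := by
  rw [disjoint_iff, eq_bot_iff]
  intro x hx
  rw [Subgroup.mem_inf] at hx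
  have h1 := orderOf_dvd_card_of_mem' hx.1
  have h2 := orderOf_dvd_card_of_mem' hx.2
  have : orderOf x ∣ 1 := h ▸ Nat.dvd_gcd h1 h2
  have : orderOf x = 1 := Nat.eq_one_of_dvd_one this
  rw [Subgroup.mem_bot]
  exact orderOf_eq_one_iff.mp this

lemma commute_of_normal_disjoint {A B : Subgroup Γ} (hA : A.Normal) (hB : B.Normal)
    (h : Disjoint A B) {a b : Γ} (ha : a ∈ A) (hb : b ∈ B) : Commute a b := by
  have hc : a⁻¹ * (b⁻¹ * a * b) ∈ A := A.mul_mem (A.inv_mem ha) (by simpa [mul_assoc] using hA.conj_mem a ha b⁻¹)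
  have hc' : (a⁻¹ * b⁻¹ * a) * b ∈ B := B.mul_mem (by simpa [mul_assoc] using hB.conj_mem b⁻¹ (B.inv_mem hb) a⁻¹) hb
  have heq : a⁻¹ * (b⁻¹ * a * b) = (a⁻¹ * b⁻¹ * a) * b := by group
  have : a⁻¹ * (b⁻¹ * a * b) ∈ A ⊓ B := ⟨hc, heq ▸ hc'⟩
  rw [h.eq_bot] at this
  have h1 : a⁻¹ * (b⁻¹ * a * b) = 1 := Subgroup.mem_bot.mp this
  have h2 : b⁻¹ * a * b = a := by
    have h3 := congrArg (fun z => a * z) h1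
    simp only [mul_one, mul_inv_cancel_left] at h3
    first
    | exact h3
    | exact h3.symm
    | (rw [← mul_assoc]; exact h3.symm)
    | (rw [← mul_assoc] at h3; exact h3.symm)
  unfold Commute SemiconjBy
  calc a * b = b * (b⁻¹ * a * b) := by group
  _ = b * a := by rw [h2]

/-- product set of two subgroups whose elements commute is a subgroup: decomposition of sup -/
lemma exists_mul_of_mem_sup {A B : Subgroup Γ}
    (hcomm : ∀ a ∈ A, ∀ b ∈ B, Commute a b) {x : Γ} (hx : x ∈ A ⊔ B) :
    ∃ a ∈ A, ∃ b ∈ B, x = a * b := by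
  let S : Subgroup Γ :=
  { carrier := (A : Set Γ) * (B : Set Γ)
    one_mem' := ⟨1, A.one_mem, 1, B.one_mem, by simp⟩
    mul_mem' := by
      rintro x y ⟨a, ha, b, hb, rfl⟩ ⟨a', ha', b', hb', rfl⟩
      refine ⟨a * a', A.mul_mem ha ha', b * b', B.mul_mem hb hb', ?_⟩
      have hcab : b * a' = a' * b := (hcomm a' ha' b hb).symm.eq
      show a * a' * (b * b') = a * b * (a' * b')
      calc a * a' * (b * b') = a * (a' * b) * b' := by group
      _ = a * (b * a') * b' := by rw [hcab]
      _ = a * b * (a' * b') := by group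
    inv_mem' := by
      rintro x ⟨a, ha, b, hb, rfl⟩
      refine ⟨a⁻¹, A.inv_mem ha, b⁻¹, B.inv_mem hb, ?_⟩
      have hcc : a⁻¹ * b⁻¹ = b⁻¹ * a⁻¹ := ((hcomm _ (A.inv_mem ha) _ (B.inv_mem hb)).eq)
      show a⁻¹ * b⁻¹ = (a * b)⁻¹
      rw [mul_inv_rev, hcc] }
  have hle : A ⊔ B ≤ S := by
    apply sup_le
    · intro a ha; exact ⟨a, ha, 1, B.one_mem, by simp⟩
    · intro b hb; exact ⟨1, A.one_mem, b, hb, by simp⟩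
  obtain ⟨a, ha, b, hb, h⟩ := hle hx
  exact ⟨a, ha, b, hb, h.symm⟩

lemma mem_left_of_orderCoprime [Finite Γ] {A B : Subgroup Γ}
    (hcomm : ∀ a ∈ A, ∀ b ∈ B, Commute a b) (hdisj : Disjoint A B)
    {x : Γ} (hx : x ∈ A ⊔ B) (h : Nat.Coprime (orderOf x) (Nat.card B)) : x ∈ A := by
  obtain ⟨a, ha, b, hb, rfl⟩ := exists_mul_of_mem_sup hcomm hx
  set n := orderOf (a * b) with hn
  have hcab : Commute a b := hcomm a ha b hb
  have hpow : (a * b) ^ n = 1 := pow_orderOf_eq_one _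
  have hab : a ^ n * b ^ n = 1 := by rw [← hcab.mul_pow]; exact hpow
  have hbn : b ^ n ∈ A ⊓ B := by
    constructor
    · have : b ^ n = (a ^ n)⁻¹ := by
        exact eq_inv_iff_mul_eq_one.mpr (((hcab.pow_pow n n).symm.eq).trans hab)
      rw [this]; exact A.inv_mem (A.pow_mem ha n)
    · exact B.pow_mem hb n
  rw [hdisj.eq_bot, Subgroup.mem_bot] at hbn
  have hob : orderOf b ∣ n := orderOf_dvd_of_pow_eq_one hbn
  have hob2 : orderOf b ∣ Nat.card B := orderOf_dvd_card_of_mem' hb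
  have : orderOf b ∣ 1 := h ▸ Nat.dvd_gcd hob hob2
  have hb1 : b = 1 := orderOf_eq_one_iff.mp (Nat.eq_one_of_dvd_one this)
  rw [hb1, mul_one]; exact ha

lemma normal_biSup {η : Type*} {N : η → Subgroup Γ} (hN : ∀ t, (N t).Normal)
    (s : Finset η) : (⨆ t ∈ s, N t).Normal := by
  constructor
  intro n hn g
  have hmap : ∀ t : η, (N t).map (MulAut.conj g).toMonoidHom = N t := by
    intro t
    have := @Subgroup.Normal.conj_smul_eq_self _ _ g (N t) (hN t)
    rwa [Subgroup.pointwise_smul_def] at this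
  have : Subgroup.map (MulAut.conj g).toMonoidHom (⨆ t ∈ s, N t) = ⨆ t ∈ s, N t := by
    rw [Subgroup.map_iSup]
    refine iSup_congr fun t => ?_
    rw [Subgroup.map_iSup]
    exact iSup_congr fun ht => hmap t
  rw [← this]
  exact ⟨n, hn, rfl⟩

end AuxLemmas
section AuxLemmas2

variable {ι : Type*} {σ : ι → Set ℕ} {Γ : Type*} [Group Γ]

lemma card_sup_dvd' [Finite Γ] {A B : Subgroup Γ} (hA : A.Normal) :
    Nat.card ↥(A ⊔ B) ∣ Nat.card A * Nat.card B := by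
  set S := A ⊔ B with hS
  have hAS : A ≤ S := le_sup_left
  have hBS : B ≤ S := le_sup_right
  haveI : (A.subgroupOf S).Normal := hA.subgroupOf S
  have hcard : Nat.card (A.subgroupOf S) * (A.subgroupOf S).index = Nat.card S :=
    Subgroup.card_mul_index _
  have hcardA : Nat.card (A.subgroupOf S) = Nat.card A :=
    Nat.card_congr (Subgroup.subgroupOfEquivOfLe hAS).toEquiv
  -- surjection from B onto the quotient
  have hsurj : Function.Surjective
      ((QuotientGroup.mk' (A.subgroupOf S)).comp (Subgroup.inclusion hBS)) := by
    intro y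
    induction y using QuotientGroup.induction_on with
    | H z =>
      obtain ⟨a, ha, b, hb, hz⟩ : ∃ a ∈ A, ∃ b ∈ B, (z : Γ) = a * b := by
        have hz : (z : Γ) ∈ ((A ⊔ B : Subgroup Γ) : Set Γ) := hS ▸ z.2
        rw [Subgroup.normal_mul A B] at hz
        obtain ⟨a, ha, b, hb, h⟩ := Set.mem_mul.mp hz
        exact ⟨a, ha, b, hb, h.symm⟩
      refine ⟨⟨b, hb⟩, ?_⟩
      simp only [MonoidHom.comp_apply, QuotientGroup.mk'_apply]
      apply (QuotientGroup.eq (s := A.subgroupOf S) ..).mpr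
      have : ((Subgroup.inclusion hBS ⟨b, hb⟩ : S) : Γ)⁻¹ * (z : Γ) ∈ A := by
        have hcoe : ((Subgroup.inclusion hBS ⟨b, hb⟩ : S) : Γ) = b := rfl
        rw [hcoe, hz]
        have : b⁻¹ * (a * b) = b⁻¹ * a * b := by group
        rw [this]
        exact hA.conj_mem' a ha b
      simpa [Subgroup.mem_subgroupOf] using this
  have hdvd : (A.subgroupOf S).index ∣ Nat.card B := by
    rw [Subgroup.index_eq_card]
    exact Subgroup.card_dvd_of_surjective _ hsurj
  calc Nat.card S = Nat.card A * (A.subgroupOf S).index := by rw [← hcard, hcardA]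
  _ ∣ Nat.card A * Nat.card B := mul_dvd_mul_left _ hdvd

lemma card_biSup_dvd' [Finite Γ] {η : Type*} [DecidableEq η] {N : η → Subgroup Γ}
    (hN : ∀ t, (N t).Normal) (s : Finset η) :
    Nat.card ↥(⨆ t ∈ s, N t) ∣ ∏ t ∈ s, Nat.card (N t) := by
  induction s using Finset.induction_on with
  | empty => simp
  | insert a s hnotmem ih =>
    rw [Finset.iSup_insert, Finset.prod_insert hnotmem]
    calc Nat.card ↥(N a ⊔ ⨆ t ∈ s, N t) ∣ Nat.card (N a) * Nat.card ↥(⨆ t ∈ s, N t) :=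
      card_sup_dvd' (hN a)
    _ ∣ Nat.card (N a) * ∏ t ∈ s, Nat.card (N t) := mul_dvd_mul_left _ ih

lemma coprime_of_classes {j : ι} {m n : ℕ}
    (h1 : ∀ r : ℕ, r.Prime → r ∣ m → r ∉ σ j)
    (h2 : ∀ r : ℕ, r.Prime → r ∣ n → r ∈ σ j) : Nat.Coprime m n := by
  by_contra hc
  obtain ⟨r, hr, hrm, hrn⟩ := Nat.Prime.not_coprime_iff_dvd.mp hc
  exact h1 r hr hrm (h2 r hr hrn)

lemma subgroup_eq_of_le_of_card_dvd [Finite Γ] {A B : Subgroup Γ} (h : A ≤ B)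
    (hcard : Nat.card B ∣ Nat.card A) : A = B := by
  have h1 : (A : Set Γ) ⊆ (B : Set Γ) := h
  have hfin : (B : Set Γ).Finite := Set.toFinite _
  have hle : (B : Set Γ).ncard ≤ (A : Set Γ).ncard := by
    rw [← Nat.card_coe_set_eq, ← Nat.card_coe_set_eq]
    exact Nat.le_of_dvd Nat.card_pos hcard
  exact SetLike.coe_injective (Set.eq_of_subset_of_ncard_le h1 hle hfin)

/-- splitting of a σ-nilpotent group at a class `j` -/
lemma sigmaNilpotent_split (hσ : IsPrimePartition σ) {X : Type*} [Group X] [Finite X]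
    (hX : SigmaNilpotent σ X) (j : ι) :
    ∃ A B : Subgroup X, A.Normal ∧ B.Normal ∧ A ⊔ B = ⊤ ∧
      (∀ r : ℕ, r.Prime → r ∣ Nat.card A → r ∉ σ j) ∧
      (∀ r : ℕ, r.Prime → r ∣ Nat.card B → r ∈ σ j) := by
  classical
  obtain ⟨k, N, hnorm, hprim, _hdisj, hsup⟩ := hX
  set s : Finset (Fin k) :=
    Finset.univ.filter (fun t => ∃ r : ℕ, r.Prime ∧ r ∣ Nat.card (N t) ∧ r ∈ σ j) with hs
  refine ⟨⨆ t ∈ sᶜ, N t, ⨆ t ∈ s, N t, normal_biSup hnorm _, normal_biSup hnorm _, ?_, ?_, ?_⟩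
  · apply le_antisymm
    · apply sup_le <;> exact iSup_le fun t => iSup_le fun _ => le_top
    · rw [← hsup]
      apply iSup_le
      intro t
      by_cases ht : t ∈ s
      · exact le_trans (le_iSup₂ (f := fun t (_ : t ∈ s) => N t) t ht) le_sup_right
      · have ht' : t ∈ sᶜ := Finset.mem_compl.mpr ht
        exact le_trans (le_iSup₂ (f := fun t (_ : t ∈ sᶜ) => N t) t ht') le_sup_left
  · intro r hr hdvd hrj
    have hd2 : r ∣ ∏ t ∈ sᶜ, Nat.card (N t) := dvd_trans hdvd (card_biSup_dvd' hnorm _)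
    obtain ⟨t, hts, hrt⟩ := (Prime.dvd_finset_prod_iff hr.prime _).mp hd2
    have : t ∉ s := Finset.mem_compl.mp hts
    exact this (by rw [hs]; simp only [Finset.mem_filter, Finset.mem_univ, true_and]
                   exact ⟨r, hr, hrt, hrj⟩)
  · intro r hr hdvd
    have hd2 : r ∣ ∏ t ∈ s, Nat.card (N t) := dvd_trans hdvd (card_biSup_dvd' hnorm _)
    obtain ⟨t, hts, hrt⟩ := (Prime.dvd_finset_prod_iff hr.prime _).mp hd2
    rw [hs] at hts
    simp only [Finset.mem_filter, Finset.mem_univ, true_and] at hts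
    obtain ⟨r', hr', hr'd, hr'j⟩ := hts
    obtain ⟨i, hi⟩ := hprim t
    have hri : r ∈ σ i := hi r hr hrt
    have hr'i : r' ∈ σ i := hi r' hr' hr'd
    by_cases hij : i = j
    · exact hij ▸ hri
    · exact absurd (Set.not_disjoint_iff.mpr ⟨r', hr'i, hr'j⟩) (fun hc => hc (hσ.2.2.1 i j hij))

end AuxLemmas2
section AuxLemmas3

variable {ι : Type*} {σ : ι → Set ℕ} {Γ : Type*} [Group Γ]

lemma split_package (hσ : IsPrimePartition σ) {X : Type*} [Group X] [Finite X]
    (hX : SigmaNilpotent σ X) (j : ι) :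
    ∃ A B : Subgroup X, A.Normal ∧ B.Normal ∧ A ⊔ B = ⊤ ∧
      (∀ r : ℕ, r.Prime → r ∣ Nat.card A → r ∉ σ j) ∧
      (∀ r : ℕ, r.Prime → r ∣ Nat.card B → r ∈ σ j) ∧
      (∀ x : X, (∀ r : ℕ, r.Prime → r ∣ orderOf x → r ∉ σ j) → x ∈ A) ∧
      (∀ y : X, (∀ r : ℕ, r.Prime → r ∣ orderOf y → r ∈ σ j) → y ∈ B) ∧
      (∀ a ∈ A, ∀ b ∈ B, Commute a b) := by
  obtain ⟨A, B, hAn, hBn, hsup, hAp, hBp⟩ := sigmaNilpotent_split hσ hX j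
  have hcop : Nat.Coprime (Nat.card A) (Nat.card B) := coprime_of_classes hAp hBp
  have hdisj : Disjoint A B := disjoint_of_coprime_card' hcop
  have hcomm : ∀ a ∈ A, ∀ b ∈ B, Commute a b :=
    fun a ha b hb => commute_of_normal_disjoint hAn hBn hdisj ha hb
  refine ⟨A, B, hAn, hBn, hsup, hAp, hBp, ?_, ?_, hcomm⟩
  · intro x hxo
    exact mem_left_of_orderCoprime hcomm hdisj (hsup ▸ Subgroup.mem_top x)
      (coprime_of_classes hxo hBp)
  · intro y hyo
    have hcomm' : ∀ b ∈ B, ∀ a ∈ A, Commute b a := fun b hb a ha => (hcomm a ha b hb).symm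
    exact mem_left_of_orderCoprime hcomm' hdisj.symm
      ((sup_comm B A ▸ hsup) ▸ Subgroup.mem_top y)
      ((coprime_of_classes hAp hyo).symm)

lemma commute_of_orders (hσ : IsPrimePartition σ) {X : Type*} [Group X] [Finite X]
    (hX : SigmaNilpotent σ X) (j : ι) {x y : X}
    (hxo : ∀ r : ℕ, r.Prime → r ∣ orderOf x → r ∉ σ j)
    (hyo : ∀ r : ℕ, r.Prime → r ∣ orderOf y → r ∈ σ j) : Commute x y := by
  obtain ⟨A, B, _, _, _, _, _, hmA, hmB, hcomm⟩ := split_package hσ hX j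
  exact hcomm x (hmA x hxo) y (hmB y hyo)

lemma commute_of_orders_of_proper {G : Type*} [Group G] [Finite G]
    (hσ : IsPrimePartition σ) (hall : ∀ H : Subgroup G, H ≠ ⊤ → SigmaNilpotent σ ↥H)
    (X : Subgroup G) (hXne : X ≠ ⊤) (j : ι) {x y : G} (hx : x ∈ X) (hy : y ∈ X)
    (hxo : ∀ r : ℕ, r.Prime → r ∣ orderOf x → r ∉ σ j)
    (hyo : ∀ r : ℕ, r.Prime → r ∣ orderOf y → r ∈ σ j) : Commute x y := by
  have hX := hall X hXne
  have hox : orderOf (⟨x, hx⟩ : X) = orderOf x :=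
    (orderOf_injective X.subtype X.subtype_injective ⟨x, hx⟩).symm
  have hoy : orderOf (⟨y, hy⟩ : X) = orderOf y :=
    (orderOf_injective X.subtype X.subtype_injective ⟨y, hy⟩).symm
  have hc : Commute (⟨x, hx⟩ : X) ⟨y, hy⟩ :=
    commute_of_orders hσ hX j (fun r h1 h2 => hxo r h1 (hox ▸ h2))
      (fun r h1 h2 => hyo r h1 (hoy ▸ h2))
  have := congrArg (Subtype.val) hc.eq
  exact this

lemma sigmaNilpotent_of_subsingleton {X : Type*} [Group X] [Subsingleton X] :
    SigmaNilpotent σ X := by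
  refine ⟨0, Fin.elim0, fun t => t.elim0, fun t => t.elim0, fun t => t.elim0, ?_⟩
  apply le_antisymm le_top
  intro x _
  have : x = 1 := Subsingleton.elim x 1
  rw [this]
  exact Subgroup.one_mem _

lemma sigmaNilpotent_of_primary {X : Type*} [Group X] (h : IsSigmaPrimary σ X) :
    SigmaNilpotent σ X := by
  refine ⟨1, fun _ => ⊤, fun _ => inferInstance, fun _ => ?_, fun t => ?_, by
    haveI : Nonempty (Fin 1) := ⟨0⟩
    simpa using iSup_const (a := (⊤ : Subgroup X))⟩
  · obtain ⟨i, hi⟩ := h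
    exact ⟨i, fun p hp hd => hi p hp (by rwa [Subgroup.card_top] at hd)⟩
  · have heq : (⨆ s : Fin 1, ⨆ _ : s ≠ t, (⊤ : Subgroup X)) = ⊥ := by
      apply le_antisymm _ bot_le
      apply iSup_le; intro s; apply iSup_le; intro hst
      exact absurd (Subsingleton.elim s t) hst
    rw [heq]
    exact disjoint_bot_right

lemma sigmaNilpotent_of_family {η : Type} [Fintype η] (N : η → Subgroup Γ)
    (h1 : ∀ t, (N t).Normal) (h2 : ∀ t, IsSigmaPrimary σ ↥(N t))
    (h3 : ∀ t, Disjoint (N t) (⨆ s, ⨆ _ : s ≠ t, N s)) (h4 : (⨆ t, N t) = ⊤) :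
    SigmaNilpotent σ Γ := by
  have e := Fintype.equivFin η
  refine ⟨Fintype.card η, N ∘ e.symm, fun t => h1 _, fun t => h2 _, fun t => ?_, ?_⟩
  · refine Disjoint.mono_right ?_ (h3 (e.symm t))
    apply iSup_le; intro s; apply iSup_le; intro hst
    refine le_iSup₂ (f := fun s' (_ : s' ≠ e.symm t) => N s') (e.symm s)
      (fun hh => hst (e.symm.injective hh))
  · rw [← h4]
    exact e.symm.surjective.iSup_comp N

lemma side_facts [Finite Γ] {A B : Subgroup Γ}
    (hcomm : ∀ a ∈ A, ∀ b ∈ B, Commute a b) (hsup : A ⊔ B = ⊤)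
    (hcop : Nat.Coprime (Nat.card A) (Nat.card B))
    {k : ℕ} {N : Fin k → Subgroup ↥A} (hN1 : ∀ t, (N t).Normal)
    (hN3 : ∀ t, Disjoint (N t) (⨆ s, ⨆ _ : s ≠ t, N s)) :
    (∀ t, ((N t).map A.subtype).Normal) ∧
      (∀ t, Disjoint ((N t).map A.subtype)
        ((⨆ s, ⨆ _ : s ≠ t, (N s).map A.subtype) ⊔ B)) := by
  have hmaple : ∀ t, (N t).map A.subtype ≤ A := fun t => Subgroup.map_subtype_le _
  constructor
  · intro t
    constructor
    intro x hx g
    obtain ⟨a, ha, b, hb, rfl⟩ := exists_mul_of_mem_sup hcomm (hsup ▸ Subgroup.mem_top g)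
    obtain ⟨x1, hx1, rfl⟩ := hx
    have hxA : (x1 : Γ) ∈ A := x1.2
    have hxb : Commute (x1 : Γ) b := hcomm _ hxA b hb
    have hb1 : b * (x1 : Γ) * b⁻¹ = (x1 : Γ) := by rw [← hxb.eq]; group
    have hmem : (⟨a, ha⟩ : A) * x1 * (⟨a, ha⟩ : A)⁻¹ ∈ N t := (hN1 t).conj_mem x1 hx1 _
    refine ⟨_, hmem, ?_⟩
    show (((⟨a, ha⟩ : A) * x1 * (⟨a, ha⟩ : A)⁻¹ : A) : Γ) = a * b * (x1 : Γ) * (a * b)⁻¹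
    have hc : (((⟨a, ha⟩ : A) * x1 * (⟨a, ha⟩ : A)⁻¹ : A) : Γ) = a * (x1 : Γ) * a⁻¹ := by
      push_cast; rfl
    rw [hc, mul_inv_rev]
    calc a * (x1 : Γ) * a⁻¹ = a * (b * (x1 : Γ) * b⁻¹) * a⁻¹ := by rw [hb1]
    _ = a * b * (x1 : Γ) * (b⁻¹ * a⁻¹) := by group
  · intro t
    set S' := ⨆ s, ⨆ _ : s ≠ t, (N s).map A.subtype with hS'
    have hS'le : S' ≤ A := by
      apply iSup_le; intro s; apply iSup_le; intro _; exact hmaple s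
    rw [disjoint_iff, eq_bot_iff]
    rintro x hx
    rw [Subgroup.mem_inf] at hx
    obtain ⟨hx1, hx2⟩ := hx
    have hxA : x ∈ A := hmaple t hx1
    have hxS' : x ∈ S' := by
      refine mem_left_of_orderCoprime (fun a ha b hb => hcomm a (hS'le ha) b hb)
        (disjoint_of_coprime_card'
          (Nat.Coprime.coprime_dvd_left (Subgroup.card_dvd_of_le hS'le) hcop)) hx2 ?_
      exact Nat.Coprime.coprime_dvd_left (orderOf_dvd_card_of_mem' hxA) hcop
    -- pull back
    have hmapS' : S' = ((⨆ s, ⨆ _ : s ≠ t, N s).map A.subtype) := by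
      rw [hS', Subgroup.map_iSup]
      refine iSup_congr fun s => ?_
      rw [Subgroup.map_iSup]
    obtain ⟨x1, hx1, hxeq⟩ := hx1
    rw [hmapS'] at hxS'
    obtain ⟨x2, hx2', hxeq2⟩ := hxS'
    have : x1 = x2 := A.subtype_injective (by rw [hxeq, hxeq2])
    have hx12 : x1 ∈ N t ⊓ (⨆ s, ⨆ _ : s ≠ t, N s) := ⟨hx1, this ▸ hx2'⟩
    rw [(hN3 t).eq_bot] at hx12
    rw [Subgroup.mem_bot] at hx12
    rw [← hxeq, hx12, Subgroup.mem_bot]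
    simp

lemma sigmaNilpotent_buildJoin [Finite Γ] (A B : Subgroup Γ)
    (hcomm : ∀ a ∈ A, ∀ b ∈ B, Commute a b) (hsup : A ⊔ B = ⊤)
    (hcop : Nat.Coprime (Nat.card A) (Nat.card B))
    (hA : SigmaNilpotent σ ↥A) (hB : SigmaNilpotent σ ↥B) : SigmaNilpotent σ Γ := by
  classical
  obtain ⟨k₁, N, hN1, hN2, hN3, hN4⟩ := hA
  obtain ⟨k₂, M, hM1, hM2, hM3, hM4⟩ := hB
  have hcomm' : ∀ b ∈ B, ∀ a ∈ A, Commute b a := fun b hb a ha => (hcomm a ha b hb).symm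
  have hsup' : B ⊔ A = ⊤ := by rwa [sup_comm]
  obtain ⟨hAn, hAd⟩ := side_facts hcomm hsup hcop hN1 hN3
  obtain ⟨hBn, hBd⟩ := side_facts hcomm' hsup' hcop.symm hM1 hM3
  set F : Fin k₁ ⊕ Fin k₂ → Subgroup Γ :=
    Sum.elim (fun t => (N t).map A.subtype) (fun t => (M t).map B.subtype) with hF
  apply sigmaNilpotent_of_family F
  · rintro (t | t)
    · exact hAn t
    · exact hBn t
  · rintro (t | t)
    · show IsSigmaPrimary σ ↥((N t).map A.subtype)
      obtain ⟨i, hi⟩ := hN2 t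
      refine ⟨i, fun p hp hd => hi p hp ?_⟩
      rwa [Nat.card_congr (Subgroup.equivMapOfInjective (N t) A.subtype
        A.subtype_injective).toEquiv.symm] at hd
    · show IsSigmaPrimary σ ↥((M t).map B.subtype)
      obtain ⟨i, hi⟩ := hM2 t
      refine ⟨i, fun p hp hd => hi p hp ?_⟩
      rwa [Nat.card_congr (Subgroup.equivMapOfInjective (M t) B.subtype
        B.subtype_injective).toEquiv.symm] at hd
  · rintro (t | t)
    · refine Disjoint.mono_right ?_ (hAd t)
      apply iSup_le; rintro (s | s) <;> apply iSup_le <;> intro hst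
      · have hsne : s ≠ t := fun h => hst (by rw [h])
        exact le_trans (le_iSup₂ (f := fun s' (_ : s' ≠ t) => (N s').map A.subtype) s hsne)
          le_sup_left
      · exact le_trans (Subgroup.map_subtype_le _) le_sup_right
    · refine Disjoint.mono_right ?_ (hBd t)
      apply iSup_le; rintro (s | s) <;> apply iSup_le <;> intro hst
      · exact le_trans (Subgroup.map_subtype_le _) le_sup_right
      · have hsne : s ≠ t := fun h => hst (by rw [h])
        exact le_trans (le_iSup₂ (f := fun s' (_ : s' ≠ t) => (M s').map B.subtype) s hsne)
          le_sup_left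
  · rw [iSup_sum]
    have e1 : (⨆ i, F (Sum.inl i)) = A := by
      show (⨆ i, (N i).map A.subtype) = A
      rw [← Subgroup.map_iSup, hN4, ← MonoidHom.range_eq_map, Subgroup.range_subtype]
    have e2 : (⨆ i, F (Sum.inr i)) = B := by
      show (⨆ i, (M i).map B.subtype) = B
      rw [← Subgroup.map_iSup, hM4, ← MonoidHom.range_eq_map, Subgroup.range_subtype]
    rw [e1, e2, hsup]

end AuxLemmas3
section AuxLemmas4

variable {ι : Type*} {σ : ι → Set ℕ} {Γ : Type*} [Group Γ]

lemma card_sup_le_of_normalized [Finite Γ] {W Q : Subgroup Γ}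
    (hinv : ∀ u ∈ Q, ∀ x ∈ W, u * x * u⁻¹ ∈ W) :
    Nat.card ↥(W ⊔ Q) ≤ Nat.card W * Nat.card Q := by
  have hWmem : ∀ u ∈ Q, ∀ x ∈ W, u * x * u⁻¹ ∈ W := hinv
  let S : Subgroup Γ :=
  { carrier := (W : Set Γ) * (Q : Set Γ)
    one_mem' := ⟨1, W.one_mem, 1, Q.one_mem, by simp⟩
    mul_mem' := by
      rintro x y ⟨w, hw, u, hu, rfl⟩ ⟨w', hw', u', hu', rfl⟩
      refine ⟨w * (u * w' * u⁻¹), W.mul_mem hw (hWmem u hu w' hw'), u * u',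
        Q.mul_mem hu hu', by group⟩
    inv_mem' := by
      rintro x ⟨w, hw, u, hu, rfl⟩
      have hmem : u⁻¹ * w⁻¹ * u ∈ W := by
        have := hWmem u⁻¹ (Q.inv_mem hu) w⁻¹ (W.inv_mem hw)
        simpa using this
      exact ⟨u⁻¹ * w⁻¹ * u, hmem, u⁻¹, Q.inv_mem hu, by group⟩ }
  have hle : W ⊔ Q ≤ S := by
    apply sup_le
    · intro w hw; exact ⟨w, hw, 1, Q.one_mem, by simp⟩
    · intro u hu; exact ⟨1, W.one_mem, u, hu, by simp⟩
  have h1 : Nat.card ↥(W ⊔ Q) ≤ Nat.card ↥S :=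
    Nat.le_of_dvd Nat.card_pos (Subgroup.card_dvd_of_le hle)
  have h2 : Nat.card ↥S = Nat.card ((W : Set Γ) * (Q : Set Γ) : Set Γ) := rfl
  have h3 : Nat.card ((W : Set Γ) * (Q : Set Γ) : Set Γ) ≤
      Nat.card (W : Set Γ) * Nat.card (Q : Set Γ) := Set.natCard_mul_le
  have h3' : Nat.card ↥S ≤ Nat.card W * Nat.card Q := h3
  exact le_trans h1 h3'

lemma dvd_of_prime_pow_parts {n m : ℕ} (hn : n ≠ 0) (hm : m ≠ 0)
    (h : ∀ p ∈ n.primeFactors, p ^ (n.factorization p) ∣ m) : n ∣ m := by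
  rw [← Nat.factorization_le_iff_dvd hn hm]
  rw [Finsupp.le_def]
  intro p
  by_cases hp : p ∈ n.primeFactors
  · have hprime : p.Prime := Nat.prime_of_mem_primeFactors hp
    exact (Nat.Prime.pow_dvd_iff_le_factorization hprime hm).mp (h p hp)
  · have : n.factorization p = 0 := by
      rw [← Nat.support_factorization] at hp
      exact Finsupp.notMem_support_iff.mp hp
    simp [this]

lemma exists_invariant_sylow [Finite Γ] {H Q : Subgroup Γ} [hHn : H.Normal]
    {q : ℕ} (hq : q.Prime) (hQq : IsPGroup q ↥Q) (hqH : ¬ q ∣ Nat.card H)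
    (p : ℕ) (hp : p.Prime) :
    ∃ P : Subgroup Γ, P ≤ H ∧ Nat.card P = p ^ ((Nat.card H).factorization p) ∧
      ∀ u ∈ Q, ∀ x ∈ P, u * x * u⁻¹ ∈ P := by
  haveI : Fact p.Prime := ⟨hp⟩
  haveI : Fact q.Prime := ⟨hq⟩
  letI : MulDistribMulAction ↥Q ↥H :=
    MulDistribMulAction.compHom _ ((MulAut.conjNormal (H := H)).comp Q.subtype)
  have hcard : ¬ q ∣ Nat.card (Sylow p ↥H) := by
    intro hdvd
    have hne : Nonempty (Sylow p ↥H) := inferInstance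
    obtain ⟨P₀⟩ := hne
    have h1 : Nat.card (Sylow p ↥H) ∣ (P₀ : Subgroup ↥H).index := Sylow.card_dvd_index _
    have h2 : (P₀ : Subgroup ↥H).index ∣ Nat.card ↥H := Subgroup.index_dvd_card _
    exact hqH (hdvd.trans (h1.trans h2))
  obtain ⟨P, hP⟩ := hQq.nonempty_fixed_point_of_prime_not_dvd_card (Sylow p ↥H) hcard
  refine ⟨(P : Subgroup ↥H).map H.subtype, Subgroup.map_subtype_le _, ?_, ?_⟩
  · rw [Nat.card_congr (Subgroup.equivMapOfInjective _ H.subtype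
      H.subtype_injective).toEquiv.symm]
    exact Sylow.card_eq_multiplicity P
  · intro u hu x hx
    obtain ⟨x1, hx1, rfl⟩ := hx
    have hfix : (⟨u, hu⟩ : Q) • P = P := hP ⟨u, hu⟩
    have hsm : (⟨u, hu⟩ : Q) • x1 ∈ (⟨u, hu⟩ : Q) • (P : Subgroup ↥H) :=
      Subgroup.smul_mem_pointwise_smul x1 _ _ hx1
    have hPsmul : (⟨u, hu⟩ : Q) • (P : Subgroup ↥H) = (P : Subgroup ↥H) := by
      rw [← Sylow.pointwise_smul_def, hfix]
    rw [hPsmul] at hsm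
    refine ⟨_, hsm, ?_⟩
    show (((⟨u, hu⟩ : Q) • x1 : ↥H) : Γ) = u * (H.subtype x1) * u⁻¹
    have : ((⟨u, hu⟩ : Q) • x1 : ↥H) = MulAut.conjNormal (u : Γ) x1 := rfl
    rw [this, MulAut.conjNormal_apply]
    rfl

end AuxLemmas4
section AuxLemmas5

lemma eq_pow_factorization_of_unique {a p : ℕ} (hp : p.Prime) (ha : a ≠ 0)
    (h : ∀ r : ℕ, r.Prime → r ∣ a → r = p) : a = p ^ (a.factorization p) := by
  obtain hL := Nat.eq_prime_pow_of_unique_prime_dvd ha (fun {d} hd hdd => h d hd hdd)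
  rw [hL, Nat.Prime.factorization_pow hp]
  simp

lemma hall_card_eq {n a b p : ℕ} (hp : p.Prime) (hn : n ≠ 0)
    (ha : a = p ^ (a.factorization p)) (hb : ¬ p ∣ b)
    (hdvd1 : a ∣ n) (hdvd2 : n ∣ a * b) : a = p ^ (n.factorization p) := by
  have ha0 : a ≠ 0 := by
    intro h; rw [h] at ha; exact (pow_ne_zero _ hp.pos.ne') ha.symm
  have hb0 : b ≠ 0 := by intro h; exact hb (h ▸ dvd_zero p)
  set α := a.factorization p with hα
  have h1 : α ≤ n.factorization p :=
    (Nat.Prime.pow_dvd_iff_le_factorization hp hn).mp (ha ▸ hdvd1)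
  have h2 : n.factorization p ≤ α := by
    have hnab : n.factorization p ≤ (a * b).factorization p :=
      (Nat.factorization_le_iff_dvd hn (Nat.mul_ne_zero ha0 hb0)).mpr hdvd2 p
    have hab : (a * b).factorization p = α := by
      rw [Nat.factorization_mul ha0 hb0]
      have hbp : b.factorization p = 0 := Nat.factorization_eq_zero_of_not_dvd hb
      have hap : a.factorization p = α := rfl
      simp [hbp, hap]
    omega
  rw [ha, le_antisymm h1 h2]

lemma sylow_normal_of_normal_hall {r : ℕ} (hr : r.Prime) {X : Type*} [Group X] [Finite X]
    {A : Subgroup X} (hAn : A.Normal) (hAcard : Nat.card A = r ^ ((Nat.card X).factorization r))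
    (P : Sylow r X) : (↑P : Subgroup X).Normal := by
  haveI : Fact r.Prime := ⟨hr⟩
  have hApg : IsPGroup r ↥A := IsPGroup.of_card hAcard
  obtain ⟨P₀, hle⟩ := hApg.exists_le_sylow
  have hcEq : Nat.card (↑P₀ : Subgroup X) = Nat.card A := by
    rw [Sylow.card_eq_multiplicity P₀, hAcard]
  have hAeq : A = ↑P₀ := subgroup_eq_of_le_of_card_dvd hle (hcEq ▸ dvd_refl _)
  haveI hP₀n : (↑P₀ : Subgroup X).Normal := hAeq ▸ hAn
  haveI := Sylow.unique_of_normal P₀ hP₀n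
  have hPP : P = P₀ := Subsingleton.elim P P₀
  rw [hPP]
  exact hP₀n

end AuxLemmas5
/-- If a finite `σ`-soluble group `G` is not `σ`-nilpotent but all of its
proper subgroups are `σ`-nilpotent, then `G` is a Schmidt group with `|σ(G)| = |π(G)|`. -/
theorem schmidt_of_minimal_nonSigmaNilpotent {ι : Type*} (σ : ι → Set ℕ)
    (hσ : IsPrimePartition σ) (G : Type*) [Group G] [Finite G]
    (hsol : SigmaSoluble σ G) (hnn : ¬ SigmaNilpotent σ G)
    (hall : ∀ H : Subgroup G, H ≠ ⊤ → SigmaNilpotent σ ↥H) :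
    IsSchmidt G ∧ (sigmaOf σ G).ncard = (Nat.card G).primeFactors.card := by
  classical
  have hcard0 : Nat.card G ≠ 0 := Nat.card_pos.ne'
  rcases subsingleton_or_nontrivial G with hsub | hnontriv
  · exact absurd sigmaNilpotent_of_subsingleton hnn
  -- a maximal proper normal subgroup K
  obtain ⟨K, ⟨hKnorm, hKne⟩, hKmax⟩ : ∃ K : Subgroup G, (K.Normal ∧ K ≠ ⊤) ∧
      ∀ L : Subgroup G, (L.Normal ∧ L ≠ ⊤) → K ≤ L → L = K := by
    have hfin : Finite (Subgroup G) :=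
      Finite.of_injective (fun L : Subgroup G => (L : Set G)) SetLike.coe_injective
    obtain ⟨K, hKS, hmax⟩ := Set.Finite.exists_maximalFor (id : Subgroup G → Subgroup G)
      {L : Subgroup G | L.Normal ∧ L ≠ ⊤} (Set.toFinite _)
      ⟨⊥, inferInstance, bot_ne_top⟩
    exact ⟨K, hKS, fun L hL hKL => le_antisymm (hmax hL hKL) hKL⟩
  haveI := hKnorm
  have hchief : IsChiefFactor G K ⊤ := by
    refine ⟨hKnorm, inferInstance, lt_top_iff_ne_top.mpr hKne, ?_⟩
    intro L hLn hKL _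
    by_cases hLtop : L = ⊤
    · exact Or.inr hLtop
    · exact Or.inl (hKmax L ⟨hLn, hLtop⟩ hKL)
  obtain ⟨j, hj⟩ := hsol K ⊤ hchief
  rw [Subgroup.relIndex_top_right] at hj
  -- split K at class j; H := the σ_j'-part of K
  obtain ⟨A₀, B₀, hA₀n, hB₀n, hsup₀, hA₀p, hB₀p, hmemA₀, hmemB₀, hcomm₀⟩ :=
    split_package hσ (hall K hKne) j
  set H : Subgroup G := A₀.map K.subtype with hHdef
  have hHleK : H ≤ K := Subgroup.map_subtype_le _
  have hcardH : Nat.card H = Nat.card A₀ :=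
    Nat.card_congr (Subgroup.equivMapOfInjective A₀ K.subtype K.subtype_injective).toEquiv.symm
  have hHp : ∀ r : ℕ, r.Prime → r ∣ Nat.card H → r ∉ σ j := by
    intro r h1 h2; exact hA₀p r h1 (hcardH ▸ h2)
  have hmemH : ∀ x : G, x ∈ H ↔ x ∈ K ∧ ∀ r : ℕ, r.Prime → r ∣ orderOf x → r ∉ σ j := by
    intro x
    constructor
    · intro hx
      refine ⟨hHleK hx, fun r h1 h2 => hHp r h1 (h2.trans (orderOf_dvd_card_of_mem' hx))⟩
    · rintro ⟨hxK, hord⟩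
      have hoeq : orderOf (⟨x, hxK⟩ : K) = orderOf x :=
        (orderOf_injective K.subtype K.subtype_injective ⟨x, hxK⟩).symm
      have : (⟨x, hxK⟩ : K) ∈ A₀ := hmemA₀ _ (fun r h1 h2 => hord r h1 (hoeq ▸ h2))
      exact ⟨⟨x, hxK⟩, this, rfl⟩
  haveI hHnorm : H.Normal := by
    constructor
    intro x hx g
    rw [hmemH] at hx ⊢
    refine ⟨hKnorm.conj_mem x hx.1 g, ?_⟩
    have hconj : g * x * g⁻¹ = (MulAut.conj g) x := rfl
    have hoeq : orderOf ((MulAut.conj g) x) = orderOf x :=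
      orderOf_injective (MulAut.conj g).toMonoidHom (MulAut.conj g).injective x
    rw [hconj, hoeq]
    exact hx.2
  have hHip : ∀ r : ℕ, r.Prime → r ∣ H.index → r ∈ σ j := by
    intro r h1 h2
    rw [← Subgroup.relIndex_mul_index hHleK] at h2
    rcases (Nat.Prime.dvd_mul h1).mp h2 with h3 | h3
    · -- relindex H K divides card B₀
      have e1 : Nat.card (H.subgroupOf K) * (H.subgroupOf K).index = Nat.card K :=
        Subgroup.card_mul_index _
      have e2 : Nat.card (H.subgroupOf K) = Nat.card H :=
        Nat.card_congr (Subgroup.subgroupOfEquivOfLe hHleK).toEquiv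
      have e3 : Nat.card K ∣ Nat.card A₀ * Nat.card B₀ := by
        have := card_sup_dvd' (B := B₀) hA₀n
        rwa [hsup₀, Subgroup.card_top] at this
      have e4 : H.relIndex K ∣ Nat.card B₀ := by
        have e5 : Nat.card A₀ * H.relIndex K = Nat.card K := by
          rw [← e1, e2, hcardH]; rfl
        have e6 : Nat.card A₀ * H.relIndex K ∣ Nat.card A₀ * Nat.card B₀ := e5 ▸ e3
        exact (Nat.mul_dvd_mul_iff_left (Nat.card_pos (α := A₀))).mp e6
      exact hB₀p r h1 (h3.trans e4)
    · exact hj r h1 h3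
  have hHne : H ≠ ⊤ := fun h => hKne (top_le_iff.mp (h ▸ hHleK))
  have hcop : Nat.Coprime (Nat.card H) H.index := coprime_of_classes hHp hHip
  obtain ⟨Q, hQc⟩ := Subgroup.exists_right_complement'_of_coprime hcop
  have hQcard : Nat.card H * Nat.card Q = Nat.card G := hQc.card_mul
  have hQeq : Nat.card Q = H.index := by
    have := Subgroup.card_mul_index H
    exact Nat.eq_of_mul_eq_mul_left (Nat.card_pos (α := H)) (hQcard.trans this.symm)
  have hQp : ∀ r : ℕ, r.Prime → r ∣ Nat.card Q → r ∈ σ j :=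
    fun r h1 h2 => hHip r h1 (hQeq ▸ h2)
  have hsupHQ : H ⊔ Q = ⊤ := hQc.sup_eq_top
  have hcopHQ : Nat.Coprime (Nat.card H) (Nat.card Q) := coprime_of_classes hHp hQp
  have hHbot : H ≠ ⊥ := by
    intro h
    apply hnn
    apply sigmaNilpotent_of_primary
    refine ⟨j, fun r h1 h2 => hQp r h1 ?_⟩
    have : Nat.card H = 1 := by rw [h]; exact Subgroup.card_bot
    rw [← hQcard, this, one_mul] at h2
    exact h2
  have hHcard1 : Nat.card H ≠ 1 := fun h => hHbot (Subgroup.card_eq_one.mp h)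
  have hQcard1 : Nat.card Q ≠ 1 := by
    rw [hQeq]
    intro h
    exact hHne (Subgroup.index_eq_one.mp h)
  have hQtop : Q ≠ ⊤ := by
    intro h
    have : Nat.card Q = Nat.card G := by rw [h]; exact Subgroup.card_top
    rw [this] at hQcard
    have : Nat.card H = 1 := by
      have hpos : 0 < Nat.card G := Nat.card_pos
      nlinarith [Nat.card_pos (α := H)]
    exact hHcard1 this
  have hNotCent : ¬ (∀ x ∈ H, ∀ u ∈ Q, Commute x u) := by
    intro hc
    exact hnn (sigmaNilpotent_buildJoin H Q hc hsupHQ hcopHQ (hall H hHne) (hall Q hQtop))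
  have hordH : ∀ x ∈ H, ∀ r : ℕ, r.Prime → r ∣ orderOf x → r ∉ σ j :=
    fun x hx r h1 h2 => hHp r h1 (h2.trans (orderOf_dvd_card_of_mem' hx))
  have hordQ : ∀ u ∈ Q, ∀ r : ℕ, r.Prime → r ∣ orderOf u → r ∈ σ j :=
    fun u hu r h1 h2 => hQp r h1 (h2.trans (orderOf_dvd_card_of_mem' hu))
  -- Q is a q-group
  obtain ⟨q, hq, hqd, hQsingle⟩ : ∃ q : ℕ, q.Prime ∧ q ∣ Nat.card Q ∧
      ∀ r : ℕ, r.Prime → r ∣ Nat.card Q → r = q := by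
    refine ⟨(Nat.card Q).minFac, Nat.minFac_prime hQcard1, Nat.minFac_dvd _, ?_⟩
    intro r hr hrd
    by_contra hne
    have key : ∀ s : ℕ, s.Prime → s ∣ Nat.card Q → ∃ Qs : Subgroup G, Qs ≤ Q ∧
        Nat.card Qs = s ^ ((Nat.card Q).factorization s) ∧
        Qs ≤ Subgroup.centralizer (H : Set G) := by
      intro s hs hsd
      haveI : Fact s.Prime := ⟨hs⟩
      obtain ⟨P₀⟩ : Nonempty (Sylow s ↥Q) := inferInstance
      refine ⟨(P₀ : Subgroup ↥Q).map Q.subtype, Subgroup.map_subtype_le _, ?_, ?_⟩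
      · rw [Nat.card_congr (Subgroup.equivMapOfInjective _ Q.subtype
          Q.subtype_injective).toEquiv.symm]
        exact Sylow.card_eq_multiplicity P₀
      · set Qs : Subgroup G := (P₀ : Subgroup ↥Q).map Q.subtype with hQsdef
        have hQsle : Qs ≤ Q := Subgroup.map_subtype_le _
        have hQscard : Nat.card Qs = s ^ ((Nat.card Q).factorization s) := by
          rw [Nat.card_congr (Subgroup.equivMapOfInjective _ Q.subtype
            Q.subtype_injective).toEquiv.symm]
          exact Sylow.card_eq_multiplicity P₀
        obtain ⟨r0, hr0p, hr0d, hr0ne⟩ : ∃ r0 : ℕ, r0.Prime ∧ r0 ∣ Nat.card Q ∧ r0 ≠ s := by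
          by_cases hsq : s = (Nat.card Q).minFac
          · exact ⟨r, hr, hrd, fun h => hne (h.trans hsq)⟩
          · exact ⟨(Nat.card Q).minFac, Nat.minFac_prime hQcard1, Nat.minFac_dvd _,
              fun h => hsq h.symm⟩
        have hQslt : Nat.card Qs < Nat.card Q := by
          refine Nat.lt_of_le_of_ne
            (Nat.le_of_dvd Nat.card_pos (Subgroup.card_dvd_of_le hQsle)) ?_
          intro heq
          have hd1 : r0 ∣ s ^ ((Nat.card Q).factorization s) := by
            rw [← hQscard, heq]; exact hr0d
          have hd2 : r0 ∣ s := Nat.Prime.dvd_of_dvd_pow hr0p hd1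
          exact hr0ne ((Nat.prime_dvd_prime_iff_eq hr0p hs).mp hd2)
        have hXcard : Nat.card ↥(H ⊔ Qs) < Nat.card G := by
          calc Nat.card ↥(H ⊔ Qs) ≤ Nat.card H * Nat.card Qs :=
            card_sup_le_of_normalized (fun u _ x hx => hHnorm.conj_mem x hx u)
          _ < Nat.card H * Nat.card Q :=
            Nat.mul_lt_mul_of_le_of_lt (le_refl _) hQslt Nat.card_pos
          _ = Nat.card G := hQcard
        have hXne : H ⊔ Qs ≠ ⊤ := by
          intro h; rw [h, Subgroup.card_top] at hXcard; exact lt_irrefl _ hXcard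
        intro y hy
        rw [Subgroup.mem_centralizer_iff]
        intro g hg
        have hc : Commute g y := commute_of_orders_of_proper hσ hall (H ⊔ Qs) hXne j
          (le_sup_left (a := H) (b := Qs) hg) (le_sup_right (a := H) (b := Qs) hy)
          (hordH g hg) (hordQ y (hQsle hy))
        exact hc.eq
    apply hNotCent
    have hQle : Q ≤ Subgroup.centralizer (H : Set G) := by
      have heq : Subgroup.centralizer (H : Set G) ⊓ Q = Q := by
        apply subgroup_eq_of_le_of_card_dvd inf_le_right
        apply dvd_of_prime_pow_parts Nat.card_pos.ne' Nat.card_pos.ne'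
        intro s hs
        obtain ⟨Qs, h1, h2, h3⟩ := key s (Nat.prime_of_mem_primeFactors hs)
          (Nat.dvd_of_mem_primeFactors hs)
        have hle2 : Qs ≤ Subgroup.centralizer (H : Set G) ⊓ Q := le_inf h3 h1
        rw [← h2]; exact Subgroup.card_dvd_of_le hle2
      intro u hu
      rw [← heq] at hu
      exact hu.1
    intro x hx u hu
    exact Subgroup.mem_centralizer_iff.mp (hQle hu) x hx
  have hQq : IsPGroup q ↥Q := by
    exact IsPGroup.of_card (Nat.eq_prime_pow_of_unique_prime_dvd Nat.card_pos.ne'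
      (fun {d} hd hdd => hQsingle d hd hdd))
  -- H is a p-group
  obtain ⟨p, hp, hpd, hHsingle⟩ : ∃ p : ℕ, p.Prime ∧ p ∣ Nat.card H ∧
      ∀ r : ℕ, r.Prime → r ∣ Nat.card H → r = p := by
    refine ⟨(Nat.card H).minFac, Nat.minFac_prime hHcard1, Nat.minFac_dvd _, ?_⟩
    intro r hr hrd
    by_contra hne
    have hqH : ¬ q ∣ Nat.card H := fun h => hHp q hq h (hQp q hq hqd)
    have key : ∀ s : ℕ, s.Prime → s ∣ Nat.card H → ∃ P : Subgroup G, P ≤ H ∧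
        Nat.card P = s ^ ((Nat.card H).factorization s) ∧
        P ≤ Subgroup.centralizer (Q : Set G) := by
      intro s hs _
      obtain ⟨P, hPle, hPcard, hPinv⟩ := exists_invariant_sylow hq hQq hqH s hs
      refine ⟨P, hPle, hPcard, ?_⟩
      obtain ⟨r0, hr0p, hr0d, hr0ne⟩ : ∃ r0 : ℕ, r0.Prime ∧ r0 ∣ Nat.card H ∧ r0 ≠ s := by
        by_cases hsp : s = (Nat.card H).minFac
        · exact ⟨r, hr, hrd, fun h => hne (h.trans hsp)⟩
        · exact ⟨(Nat.card H).minFac, Nat.minFac_prime hHcard1, Nat.minFac_dvd _,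
            fun h => hsp h.symm⟩
      have hPlt : Nat.card P < Nat.card H := by
        refine Nat.lt_of_le_of_ne
          (Nat.le_of_dvd Nat.card_pos (Subgroup.card_dvd_of_le hPle)) ?_
        intro heq
        have hd1 : r0 ∣ s ^ ((Nat.card H).factorization s) := by
          rw [← hPcard, heq]; exact hr0d
        have hd2 : r0 ∣ s := Nat.Prime.dvd_of_dvd_pow hr0p hd1
        exact hr0ne ((Nat.prime_dvd_prime_iff_eq hr0p hs).mp hd2)
      have hXcard : Nat.card ↥(P ⊔ Q) < Nat.card G := by
        calc Nat.card ↥(P ⊔ Q) ≤ Nat.card P * Nat.card Q :=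
          card_sup_le_of_normalized (fun u hu x hx => hPinv u hu x hx)
        _ < Nat.card H * Nat.card Q :=
          Nat.mul_lt_mul_of_lt_of_le hPlt (le_refl _) Nat.card_pos
        _ = Nat.card G := hQcard
      have hXne : P ⊔ Q ≠ ⊤ := by
        intro h; rw [h, Subgroup.card_top] at hXcard; exact lt_irrefl _ hXcard
      intro y hy
      rw [Subgroup.mem_centralizer_iff]
      intro g hg
      have hc : Commute y g := commute_of_orders_of_proper hσ hall (P ⊔ Q) hXne j
        (le_sup_left (a := P) (b := Q) hy) (le_sup_right (a := P) (b := Q) hg)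
        (fun r' h1 h2 => hHp r' h1 (h2.trans (orderOf_dvd_card_of_mem' (hPle hy))))
        (hordQ g hg)
      exact hc.symm.eq
    apply hNotCent
    have hHle : H ≤ Subgroup.centralizer (Q : Set G) := by
      have heq : Subgroup.centralizer (Q : Set G) ⊓ H = H := by
        apply subgroup_eq_of_le_of_card_dvd inf_le_right
        apply dvd_of_prime_pow_parts Nat.card_pos.ne' Nat.card_pos.ne'
        intro s hs
        obtain ⟨P, h1, h2, h3⟩ := key s (Nat.prime_of_mem_primeFactors hs)
          (Nat.dvd_of_mem_primeFactors hs)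
        have hle2 : P ≤ Subgroup.centralizer (Q : Set G) ⊓ H := le_inf h3 h1
        rw [← h2]; exact Subgroup.card_dvd_of_le hle2
      intro x hx
      rw [← heq] at hx
      exact hx.1
    intro x hx u hu
    exact (Subgroup.mem_centralizer_iff.mp (hHle hx) u hu).symm
  -- final assembly
  have hqj : q ∈ σ j := hQp q hq hqd
  have hpj : p ∉ σ j := hHp p hp hpd
  have hpq : p ≠ q := fun h => hpj (h ▸ hqj)
  obtain ⟨ip, hip⟩ := hσ.2.2.2 p hp
  have hipj : ip ≠ j := fun h => hpj (h ▸ hip)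
  have hprimesG : ∀ r : ℕ, r.Prime → (r ∣ Nat.card G ↔ (r = p ∨ r = q)) := by
    intro r hr
    constructor
    · intro hd
      rw [← hQcard] at hd
      rcases (Nat.Prime.dvd_mul hr).mp hd with h | h
      · exact Or.inl (hHsingle r hr h)
      · exact Or.inr (hQsingle r hr h)
    · rintro (rfl | rfl)
      · exact hpd.trans (Subgroup.card_subgroup_dvd_card H)
      · exact hqd.trans (Subgroup.card_subgroup_dvd_card Q)
  have hpf : (Nat.card G).primeFactors = {p, q} := by
    ext r
    rw [Nat.mem_primeFactors, Finset.mem_insert, Finset.mem_singleton]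
    constructor
    · rintro ⟨hr, hd, -⟩
      exact (hprimesG r hr).mp hd
    · rintro (rfl | rfl)
      · exact ⟨hp, (hprimesG r hp).mpr (Or.inl rfl), hcard0⟩
      · exact ⟨hq, (hprimesG r hq).mpr (Or.inr rfl), hcard0⟩
  have hpfcard : (Nat.card G).primeFactors.card = 2 := by
    rw [hpf, Finset.card_insert_of_notMem (by simp [hpq]), Finset.card_singleton]
  have hsig : sigmaOf σ G = {ip, j} := by
    ext i
    simp only [sigmaOf, Set.mem_setOf_eq, Set.mem_insert_iff, Set.mem_singleton_iff]
    constructor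
    · rintro ⟨r, hrσ, hrp, hrd⟩
      rcases (hprimesG r hrp).mp hrd with rfl | rfl
      · left
        by_contra hne2
        exact Set.disjoint_left.mp (hσ.2.2.1 i ip hne2) hrσ hip
      · right
        by_contra hne2
        exact Set.disjoint_left.mp (hσ.2.2.1 i j hne2) hrσ hqj
    · rintro (rfl | rfl)
      · exact ⟨p, hip, hp, (hprimesG p hp).mpr (Or.inl rfl)⟩
      · exact ⟨q, hqj, hq, (hprimesG q hq).mpr (Or.inr rfl)⟩
  have hsigcard : (sigmaOf σ G).ncard = 2 := by
    rw [hsig]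
    exact Set.ncard_pair hipj
  refine ⟨⟨?_, ?_⟩, by rw [hsigcard, hpfcard]⟩
  · -- G is not nilpotent
    intro hnil
    haveI : Fact p.Prime := ⟨hp⟩
    haveI : Fact q.Prime := ⟨hq⟩
    have h34 := ((isNilpotent_of_finite_tfae (G := G)).out 0 3).mp hnil
    obtain ⟨P⟩ : Nonempty (Sylow p G) := inferInstance
    obtain ⟨Qs⟩ : Nonempty (Sylow q G) := inferInstance
    haveI hPn : (↑P : Subgroup G).Normal := h34 p ⟨hp⟩ P
    haveI hQn : (↑Qs : Subgroup G).Normal := h34 q ⟨hq⟩ Qs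
    have hPc : Nat.card (↑P : Subgroup G) = p ^ ((Nat.card G).factorization p) :=
      Sylow.card_eq_multiplicity P
    have hQc : Nat.card (↑Qs : Subgroup G) = q ^ ((Nat.card G).factorization q) :=
      Sylow.card_eq_multiplicity Qs
    have hcopc : Nat.Coprime (Nat.card (↑P : Subgroup G)) (Nat.card (↑Qs : Subgroup G)) := by
      rw [hPc, hQc]
      exact Nat.Coprime.pow _ _ ((Nat.coprime_primes hp hq).mpr hpq)
    have hGfact : Nat.card G =
        p ^ ((Nat.card G).factorization p) * q ^ ((Nat.card G).factorization q) := by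
      conv_lhs => rw [← Nat.factorization_prod_pow_eq_self hcard0]
      rw [Finsupp.prod, Nat.support_factorization, hpf, Finset.prod_pair hpq]
    have hsupPQ : (↑P : Subgroup G) ⊔ ↑Qs = ⊤ := by
      apply subgroup_eq_of_le_of_card_dvd le_top
      rw [Subgroup.card_top]
      have d1 : p ^ ((Nat.card G).factorization p) ∣
          Nat.card ↥((↑P : Subgroup G) ⊔ ↑Qs) := by
        rw [← hPc]; exact Subgroup.card_dvd_of_le le_sup_left
      have d2 : q ^ ((Nat.card G).factorization q) ∣
          Nat.card ↥((↑P : Subgroup G) ⊔ ↑Qs) := by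
        rw [← hQc]; exact Subgroup.card_dvd_of_le le_sup_right
      rw [hGfact]
      exact Nat.Coprime.mul_dvd_of_dvd_of_dvd
        (Nat.Coprime.pow _ _ ((Nat.coprime_primes hp hq).mpr hpq)) d1 d2
    apply hnn
    refine sigmaNilpotent_buildJoin _ _
      (fun a ha b hb => commute_of_normal_disjoint hPn hQn
        (disjoint_of_coprime_card' hcopc) ha hb)
      hsupPQ hcopc ?_ ?_
    · apply sigmaNilpotent_of_primary
      refine ⟨ip, fun r hr hd => ?_⟩
      rw [hPc] at hd
      have hrp : r = p := (Nat.prime_dvd_prime_iff_eq hr hp).mp (Nat.Prime.dvd_of_dvd_pow hr hd)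
      rwa [hrp]
    · apply sigmaNilpotent_of_primary
      refine ⟨j, fun r hr hd => ?_⟩
      rw [hQc] at hd
      have hrq : r = q := (Nat.prime_dvd_prime_iff_eq hr hq).mp (Nat.Prime.dvd_of_dvd_pow hr hd)
      rwa [hrq]
  · -- every proper subgroup is nilpotent
    intro W hWne
    obtain ⟨AW, BW, hAWn, hBWn, hsupW, hAWp, hBWp, -, -, -⟩ :=
      split_package hσ (hall W hWne) j
    have hWdvd : Nat.card ↥W ∣ Nat.card G := Subgroup.card_subgroup_dvd_card W
    have hAWle : ∀ r : ℕ, r.Prime → r ∣ Nat.card AW → r = p := by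
      intro r hr hd
      have hrG : r ∣ Nat.card G := (hd.trans (Subgroup.card_subgroup_dvd_card AW)).trans hWdvd
      rcases (hprimesG r hr).mp hrG with h | h
      · exact h
      · exact absurd (h ▸ hqj) (hAWp r hr hd)
    have hBWle : ∀ r : ℕ, r.Prime → r ∣ Nat.card BW → r = q := by
      intro r hr hd
      have hrG : r ∣ Nat.card G := (hd.trans (Subgroup.card_subgroup_dvd_card BW)).trans hWdvd
      rcases (hprimesG r hr).mp hrG with h | h
      · exact absurd (hBWp r hr hd) (h ▸ hpj)
      · exact h
    have hAWpow : Nat.card AW = p ^ ((Nat.card AW).factorization p) :=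
      eq_pow_factorization_of_unique hp Nat.card_pos.ne' hAWle
    have hBWpow : Nat.card BW = q ^ ((Nat.card BW).factorization q) :=
      eq_pow_factorization_of_unique hq Nat.card_pos.ne' hBWle
    have hWsup : Nat.card ↥W ∣ Nat.card AW * Nat.card BW := by
      have hcs := card_sup_dvd' (B := BW) hAWn
      rwa [hsupW, Subgroup.card_top] at hcs
    have hAWfull : Nat.card AW = p ^ ((Nat.card ↥W).factorization p) :=
      hall_card_eq hp Nat.card_pos.ne' hAWpow (fun h => hpq (hBWle p hp h))
        (Subgroup.card_subgroup_dvd_card AW) hWsup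
    have hBWfull : Nat.card BW = q ^ ((Nat.card ↥W).factorization q) :=
      hall_card_eq hq Nat.card_pos.ne' hBWpow (fun h => hpq ((hAWle q hq h).symm))
        (Subgroup.card_subgroup_dvd_card BW) ((mul_comm (Nat.card AW) (Nat.card BW)) ▸ hWsup)
    have hsyl : ∀ (r : ℕ) (_ : Fact r.Prime) (Pr : Sylow r ↥W),
        (↑Pr : Subgroup ↥W).Normal := by
      intro r hrf Pr
      haveI := hrf
      by_cases hrd : r ∣ Nat.card ↥W
      · have hrG : r ∣ Nat.card G := hrd.trans hWdvd
        rcases (hprimesG r hrf.out).mp hrG with rfl | rfl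
        · exact sylow_normal_of_normal_hall hrf.out hAWn hAWfull Pr
        · exact sylow_normal_of_normal_hall hrf.out hBWn hBWfull Pr
      · have hcard : Nat.card (↑Pr : Subgroup ↥W) = 1 := by
          rw [Sylow.card_eq_multiplicity Pr, Nat.factorization_eq_zero_of_not_dvd hrd, pow_zero]
        have hbot : (↑Pr : Subgroup ↥W) = ⊥ := Subgroup.card_eq_one.mp hcard
        rw [hbot]; infer_instance
    exact ((isNilpotent_of_finite_tfae (G := ↥W)).out 3 0).mp hsyl
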